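/- Let d ≥ 1 and s ≥ 1 be integers, and let f : ℝ^d → ℂ be of class C^{2s} with D^α f integrable for every multi-index α with |α| ≤ 2s. Then there exists a constant C > 0 depending only on d and s such that for all x ∈ ℝ^d, η > 0, and ε > 0, | ∫_{‖ξ‖ ≥ η} e^{2πi x·ξ} e^{-π ε² ‖ξ‖²} f̂(ξ) dξ | ≤ C (∑_{|α| ≤ 2s} ‖D^α f‖_{L¹(ℝ^d)}) ε^{-d} η^{-2s}, where the integral converges absolutely. -/

import Mathlib

open MeasureTheory Filter Real

/-- The Fourier transform `f̂(ξ) = ∫_{ℝ^d} e^{-2πi x·ξ} f(x) dx` of `f : ℝ^d → ℂ`. -/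
noncomputable def FT {d : ℕ} (f : EuclideanSpace ℝ (Fin d) → ℂ)
    (ξ : EuclideanSpace ℝ (Fin d)) : ℂ :=
  ∫ x : EuclideanSpace ℝ (Fin d),
    Complex.exp ((-2 * π * Complex.I) * ((inner ℝ x ξ : ℝ) : ℂ)) * f x

/-- The partial derivative `∂_{x_i} f` of `f : ℝ^d → ℂ`. -/
noncomputable def pderiv' {d : ℕ} (i : Fin d) (f : EuclideanSpace ℝ (Fin d) → ℂ) :
    EuclideanSpace ℝ (Fin d) → ℂ :=
  fun x => fderiv ℝ f x (EuclideanSpace.single i 1)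

/-- The multi-index derivative `D^α f = ∂^{α_1}_{x_1} ⋯ ∂^{α_d}_{x_d} f` of `f : ℝ^d → ℂ`. -/
noncomputable def mderiv {d : ℕ} (α : Fin d → ℕ) (f : EuclideanSpace ℝ (Fin d) → ℂ) :
    EuclideanSpace ℝ (Fin d) → ℂ :=
  (List.finRange d).foldr (fun i g => (pderiv' i)^[α i] g) f

/-- The (finite) set of multi-indices `α` on `ℝ^d` with `|α| ≤ M`. -/
def mIdx (d M : ℕ) : Finset (Fin d → ℕ) :=
  (Fintype.piFinset fun _ : Fin d => Finset.range (M + 1)).filter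
    fun α => (∑ i, α i) ≤ M

/-! ### pList -/

noncomputable def pList {d : ℕ} (l : List (Fin d)) (f : EuclideanSpace ℝ (Fin d) → ℂ) :
    EuclideanSpace ℝ (Fin d) → ℂ :=
  l.foldr (fun i g => pderiv' i g) f

@[simp] lemma pList_nil {d : ℕ} (f : EuclideanSpace ℝ (Fin d) → ℂ) : pList [] f = f := rfl

@[simp] lemma pList_cons {d : ℕ} (i : Fin d) (l : List (Fin d))
    (f : EuclideanSpace ℝ (Fin d) → ℂ) : pList (i :: l) f = pderiv' i (pList l f) := rfl

lemma pList_append {d : ℕ} (l₁ l₂ : List (Fin d)) (f : EuclideanSpace ℝ (Fin d) → ℂ) :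
    pList (l₁ ++ l₂) f = pList l₁ (pList l₂ f) := by
  simp [pList, List.foldr_append]

lemma pList_replicate {d : ℕ} (k : ℕ) (i : Fin d) (f : EuclideanSpace ℝ (Fin d) → ℂ) :
    pList (List.replicate k i) f = (pderiv' i)^[k] f := by
  induction k with
  | zero => rfl
  | succ k ih => rw [List.replicate_succ, pList_cons, ih, Function.iterate_succ_apply']

def listOfIdx {d : ℕ} (α : Fin d → ℕ) : List (Fin d) :=
  (List.finRange d).foldr (fun i L => List.replicate (α i) i ++ L) []

lemma mderiv_eq_pList {d : ℕ} (α : Fin d → ℕ) (f : EuclideanSpace ℝ (Fin d) → ℂ) :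
    mderiv α f = pList (listOfIdx α) f := by
  unfold mderiv listOfIdx
  induction (List.finRange d) with
  | nil => rfl
  | cons i L ih => simp only [List.foldr_cons, ih, pList_append, pList_replicate]


lemma count_foldr_aux {d : ℕ} (α : Fin d → ℕ) (i : Fin d) :
    ∀ L : List (Fin d), L.Nodup →
      (L.foldr (fun i L => List.replicate (α i) i ++ L) []).count i
        = if i ∈ L then α i else 0 := by
  intro L
  induction L with
  | nil => simp
  | cons j L ih =>
    intro hnd
    obtain ⟨hj, hnd'⟩ := List.nodup_cons.1 hnd
    simp only [List.foldr_cons, List.count_append, ih hnd', List.count_replicate,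
      List.mem_cons]
    rcases eq_or_ne i j with rfl | hij
    · simp [if_neg hj]
    · simp [hij, Ne.symm hij]

lemma count_listOfIdx {d : ℕ} (α : Fin d → ℕ) (i : Fin d) :
    (listOfIdx α).count i = α i := by
  rw [listOfIdx, count_foldr_aux α i _ (List.nodup_finRange d),
    if_pos (List.mem_finRange i)]
lemma sum_count_eq_length {d : ℕ} (l : List (Fin d)) : (∑ i, l.count i) = l.length := by
  induction l with
  | nil => simp
  | cons a l ih =>
    simp only [List.count_cons, List.length_cons, ← ih, Finset.sum_add_distrib]
    simp [Finset.sum_ite_eq' Finset.univ a (fun _ => 1)]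

/-! ### Smoothness and symmetry -/

lemma pderiv'_contDiff {d : ℕ} {g : EuclideanSpace ℝ (Fin d) → ℂ} {n : ℕ} (i : Fin d)
    (hg : ContDiff ℝ ((n + 1 : ℕ)) g) : ContDiff ℝ (n : ℕ) (pderiv' i g) := by
  have h : ContDiff ℝ (n : ℕ) (fderiv ℝ g) := by
    apply hg.fderiv_right
    push_cast
    exact le_refl _
  exact h.clm_apply contDiff_const

lemma pderiv'_comm {d : ℕ} {g : EuclideanSpace ℝ (Fin d) → ℂ}
    (hg : ContDiff ℝ 2 g) (a b : Fin d) :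
    pderiv' a (pderiv' b g) = pderiv' b (pderiv' a g) := by
  have hdg : Differentiable ℝ (fderiv ℝ g) := by
    have : ContDiff ℝ 1 (fderiv ℝ g) := hg.fderiv_right (by norm_num)
    exact this.differentiable (by norm_num)
  have key : ∀ (c : Fin d) (v : EuclideanSpace ℝ (Fin d)) (x),
      pderiv' c (fun y => fderiv ℝ g y v) x
        = fderiv ℝ (fderiv ℝ g) x (EuclideanSpace.single c 1) v := by
    intro c v x
    have h1 : HasFDerivAt (fun y => fderiv ℝ g y v)
        ((ContinuousLinearMap.apply ℝ ℂ v).comp (fderiv ℝ (fderiv ℝ g) x)) x :=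
      (ContinuousLinearMap.apply ℝ ℂ v).hasFDerivAt.comp x (hdg x).hasFDerivAt
    simp only [pderiv', h1.fderiv, ContinuousLinearMap.coe_comp', Function.comp_apply,
      ContinuousLinearMap.apply_apply]
  funext x
  show pderiv' a (fun y => fderiv ℝ g y (EuclideanSpace.single b 1)) x
      = pderiv' b (fun y => fderiv ℝ g y (EuclideanSpace.single a 1)) x
  rw [key a _ x, key b _ x]
  exact (hg.contDiffAt.isSymmSndFDerivAt (by norm_num)).eq _ _

lemma pList_contDiff {d : ℕ} :
    ∀ (l : List (Fin d)) (f : EuclideanSpace ℝ (Fin d) → ℂ) (n : ℕ),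
      ContDiff ℝ ((n + l.length : ℕ)) f → ContDiff ℝ (n : ℕ) (pList l f) := by
  intro l
  induction l with
  | nil => intro f n hf; simpa using hf
  | cons i l ih =>
    intro f n hf
    rw [pList_cons]
    apply pderiv'_contDiff
    exact ih f (n + 1) (by convert hf using 2; simp; omega)

lemma pList_perm {d : ℕ} {l₁ l₂ : List (Fin d)} (h : l₁.Perm l₂)
    {f : EuclideanSpace ℝ (Fin d) → ℂ} {n : ℕ} (hf : ContDiff ℝ (n : ℕ) f)
    (hl : l₁.length ≤ n) : pList l₁ f = pList l₂ f := by
  induction h with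
  | nil => rfl
  | cons x h ih =>
    simp only [List.length_cons] at hl
    rw [pList_cons, pList_cons, ih (by omega)]
  | swap x y l =>
    simp only [List.length_cons] at hl
    rw [pList_cons, pList_cons, pList_cons, pList_cons]
    have h2 : ContDiff ℝ (2 : ℕ) (pList l f) := by
      apply pList_contDiff l f 2
      exact hf.of_le (by exact_mod_cast (show (2 + l.length) ≤ n by omega))
    exact pderiv'_comm (by exact_mod_cast h2) y x
  | trans h₁ h₂ ih₁ ih₂ =>
    rw [ih₁ hl, ih₂ (h₁.length_eq ▸ hl)]

lemma pList_eq_mderiv {d : ℕ} (l : List (Fin d)) {f : EuclideanSpace ℝ (Fin d) → ℂ}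
    {n : ℕ} (hf : ContDiff ℝ (n : ℕ) f) (hl : l.length ≤ n) :
    pList l f = mderiv (fun i => l.count i) f := by
  rw [mderiv_eq_pList]
  apply pList_perm _ hf hl
  exact List.perm_iff_count.2 fun a => (count_listOfIdx (fun i => l.count i) a).symm

/-! ### Multilinear norm bound -/

lemma coord_abs_le_norm {d : ℕ} (v : EuclideanSpace ℝ (Fin d)) (i : Fin d) :
    |v i| ≤ ‖v‖ := by
  have h := abs_real_inner_le_norm (EuclideanSpace.single i (1 : ℝ)) v
  simpa [EuclideanSpace.inner_single_left, EuclideanSpace.norm_single] using h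

lemma euclidean_sum_single {d : ℕ} (v : EuclideanSpace ℝ (Fin d)) :
    v = ∑ i, v i • (EuclideanSpace.single i (1 : ℝ)) := by
  ext k
  rw [WithLp.ofLp_sum, Finset.sum_apply]
  simp [EuclideanSpace.single_apply]

lemma multilinear_norm_le {d n : ℕ}
    (m : ContinuousMultilinearMap ℝ (fun _ : Fin n => EuclideanSpace ℝ (Fin d)) ℂ) :
    ‖m‖ ≤ ∑ b : Fin n → Fin d, ‖m (fun j => EuclideanSpace.single (b j) 1)‖ := by
  apply ContinuousMultilinearMap.opNorm_le_bound
    (Finset.sum_nonneg fun _ _ => norm_nonneg _)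
  intro v
  have expand : m v = ∑ b : Fin n → Fin d,
      (∏ j, v j (b j)) • m (fun j => EuclideanSpace.single (b j) 1) := by
    conv_lhs => rw [show v = fun j => ∑ i, v j i • (EuclideanSpace.single i (1:ℝ)) from
      funext fun j => euclidean_sum_single (v j)]
    rw [show (m fun j => ∑ i, v j i • (EuclideanSpace.single i (1:ℝ)))
        = ∑ b : Fin n → Fin d, m fun j => v j (b j) • EuclideanSpace.single (b j) (1:ℝ) from
      m.toMultilinearMap.map_sum (fun j i => v j i • EuclideanSpace.single i (1:ℝ))]
    exact Finset.sum_congr rfl fun b _ =>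
      m.toMultilinearMap.map_smul_univ (fun j => v j (b j)) _
  rw [expand, Finset.sum_mul]
  refine (norm_sum_le _ _).trans (Finset.sum_le_sum fun b _ => ?_)
  rw [norm_smul, mul_comm]
  refine mul_le_mul_of_nonneg_left ?_ (norm_nonneg _)
  calc ‖∏ j, v j (b j)‖ ≤ ∏ j, |v j (b j)| := by rw [Real.norm_eq_abs, Finset.abs_prod]
    _ ≤ ∏ j, ‖v j‖ := Finset.prod_le_prod (fun _ _ => abs_nonneg _)
        (fun j _ => coord_abs_le_norm _ _)

/-! ### iteratedFDeriv basis evaluation -/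

lemma iteratedFDeriv_single_eq_pList {d N : ℕ} {f : EuclideanSpace ℝ (Fin d) → ℂ}
    (hf : ContDiff ℝ (N : ℕ) f) :
    ∀ (n : ℕ), n ≤ N → ∀ (b : Fin n → Fin d),
      (fun x => iteratedFDeriv ℝ n f x (fun j => EuclideanSpace.single (b j) 1))
        = pList (List.ofFn b) f := by
  intro n
  induction n with
  | zero =>
    intro _ b
    funext x
    simp [iteratedFDeriv_zero_apply]
  | succ n ih =>
    intro hn b
    have hdiff : Differentiable ℝ (iteratedFDeriv ℝ n f) :=
      hf.differentiable_iteratedFDeriv (by exact_mod_cast (show n < N by omega))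
    rw [List.ofFn_succ, pList_cons, ← ih (by omega) (fun j => b j.succ)]
    funext x
    rw [iteratedFDeriv_succ_apply_left]
    set A := ContinuousMultilinearMap.apply ℝ (fun _ : Fin n => EuclideanSpace ℝ (Fin d)) ℂ
        (fun j => EuclideanSpace.single (b j.succ) 1) with hA
    have h1 : HasFDerivAt (fun y => A (iteratedFDeriv ℝ n f y))
        (A.comp (fderiv ℝ (iteratedFDeriv ℝ n f) x)) x :=
      A.hasFDerivAt.comp x (hdiff x).hasFDerivAt
    have h2 : pderiv' (b 0) (fun y => A (iteratedFDeriv ℝ n f y)) x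
        = fderiv ℝ (iteratedFDeriv ℝ n f) x (EuclideanSpace.single (b 0) 1)
            (fun j => EuclideanSpace.single (b j.succ) 1) := by
      rw [pderiv', h1.fderiv]
      rfl
    have h3 : pderiv' (b 0) (fun y => (iteratedFDeriv ℝ n f y)
        (fun j => EuclideanSpace.single (b j.succ) 1)) x
        = fderiv ℝ (iteratedFDeriv ℝ n f) x (EuclideanSpace.single (b 0) 1)
            (fun j => EuclideanSpace.single (b j.succ) 1) := h2
    rw [h3]
    rfl

/-! ### Domination of iterated derivatives by mderivs -/

lemma iteratedFDeriv_norm_le {d N : ℕ} {f : EuclideanSpace ℝ (Fin d) → ℂ}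
    (hf : ContDiff ℝ (N : ℕ) f) {n : ℕ} (hn : n ≤ N) (x : EuclideanSpace ℝ (Fin d)) :
    ‖iteratedFDeriv ℝ n f x‖
      ≤ ∑ b : Fin n → Fin d, ‖mderiv (fun i => (List.ofFn b).count i) f x‖ := by
  refine (multilinear_norm_le _).trans (le_of_eq (Finset.sum_congr rfl fun b _ => ?_))
  rw [congrFun (iteratedFDeriv_single_eq_pList hf n hn b) x,
    congrFun (pList_eq_mderiv (List.ofFn b) hf (by simpa using hn)) x]

lemma count_ofFn_mem_mIdx {d N n : ℕ} (hn : n ≤ N) (b : Fin n → Fin d) :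
    (fun i => (List.ofFn b).count i) ∈ mIdx d N := by
  have hsum : (∑ i, (List.ofFn b).count i) = n := by
    rw [sum_count_eq_length, List.length_ofFn]
  refine Finset.mem_filter.2 ⟨Fintype.mem_piFinset.2 fun i => ?_, ?_⟩
  · have h1 : (List.ofFn b).count i ≤ ∑ j, (List.ofFn b).count j := Finset.single_le_sum
      (f := fun j => (List.ofFn b).count j) (fun _ _ => Nat.zero_le _) (Finset.mem_univ i)
    exact Finset.mem_range.2 (by omega)
  · simp only []
    omega

set_option synthInstance.maxHeartbeats 1000000 in
lemma integrable_iteratedFDeriv_of_mderiv {d N : ℕ} {f : EuclideanSpace ℝ (Fin d) → ℂ}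
    (hf : ContDiff ℝ (N : ℕ) f)
    (hint : ∀ α : Fin d → ℕ, (∑ i, α i) ≤ N → Integrable (mderiv α f))
    {n : ℕ} (hn : n ≤ N) : Integrable (iteratedFDeriv ℝ n f) := by
  have hib : ∀ b : Fin n → Fin d, Integrable (mderiv (fun i => (List.ofFn b).count i) f) := by
    intro b
    apply hint
    rw [sum_count_eq_length, List.length_ofFn]
    omega
  refine (Integrable.mono' (g := fun x =>
      ∑ b : Fin n → Fin d, ‖mderiv (fun i => (List.ofFn b).count i) f x‖)
    (integrable_finset_sum _ fun b _ => (hib b).norm) ?_ ?_)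
  · exact (hf.continuous_iteratedFDeriv (by exact_mod_cast hn)).aestronglyMeasurable
  · exact Filter.Eventually.of_forall fun x => iteratedFDeriv_norm_le hf hn x

lemma integral_iteratedFDeriv_le {d N : ℕ} {f : EuclideanSpace ℝ (Fin d) → ℂ}
    (hf : ContDiff ℝ (N : ℕ) f)
    (hint : ∀ α : Fin d → ℕ, (∑ i, α i) ≤ N → Integrable (mderiv α f))
    {n : ℕ} (hn : n ≤ N) :
    (∫ x, ‖iteratedFDeriv ℝ n f x‖)
      ≤ (d ^ n : ℝ) * ∑ α ∈ mIdx d N, ∫ y, ‖mderiv α f y‖ := by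
  have hS : ∀ b : Fin n → Fin d,
      (∫ x, ‖mderiv (fun i => (List.ofFn b).count i) f x‖)
        ≤ ∑ α ∈ mIdx d N, ∫ y, ‖mderiv α f y‖ := by
    intro b
    apply Finset.single_le_sum (f := fun α => ∫ y, ‖mderiv α f y‖)
      (fun α _ => integral_nonneg fun y => norm_nonneg _) (count_ofFn_mem_mIdx hn b)
  have hib : ∀ b : Fin n → Fin d, Integrable (mderiv (fun i => (List.ofFn b).count i) f) := by
    intro b
    apply hint
    rw [sum_count_eq_length, List.length_ofFn]
    omega
  calc (∫ x, ‖iteratedFDeriv ℝ n f x‖)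
      ≤ ∫ x, ∑ b : Fin n → Fin d, ‖mderiv (fun i => (List.ofFn b).count i) f x‖ := by
        apply integral_mono_of_nonneg (Filter.Eventually.of_forall fun x => norm_nonneg _)
          (integrable_finset_sum _ fun b _ => (hib b).norm)
        exact Filter.Eventually.of_forall fun x => iteratedFDeriv_norm_le hf hn x
    _ = ∑ b : Fin n → Fin d, ∫ x, ‖mderiv (fun i => (List.ofFn b).count i) f x‖ :=
        integral_finset_sum _ fun b _ => (hib b).norm
    _ ≤ ∑ _b : Fin n → Fin d, ∑ α ∈ mIdx d N, ∫ y, ‖mderiv α f y‖ :=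
        Finset.sum_le_sum fun b _ => hS b
    _ = (d ^ n : ℝ) * ∑ α ∈ mIdx d N, ∫ y, ‖mderiv α f y‖ := by
        rw [Finset.sum_const, Finset.card_univ, Fintype.card_fun]
        simp [Fintype.card_fin, mul_comm]

/-! ### Fourier decay -/

open FourierTransform in
lemma fourier_decay_aux {d N : ℕ} {f : EuclideanSpace ℝ (Fin d) → ℂ}
    (hf : ContDiff ℝ (N : ℕ) f)
    (h'f : ∀ n : ℕ, n ≤ N → Integrable (iteratedFDeriv ℝ n f))
    (ξ : EuclideanSpace ℝ (Fin d)) :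
    (2 * π) ^ N * (‖ξ‖ ^ (2 * N) * ‖𝓕 f ξ‖)
      ≤ ‖ξ‖ ^ N * ∫ x, ‖iteratedFDeriv ℝ N f x‖ := by
  have key := Real.fourier_iteratedFDeriv (N := (N : ℕ∞))
    (by exact_mod_cast hf) (fun n hn => h'f n (by exact_mod_cast hn)) (le_refl _)
  have e2 : 𝓕 (iteratedFDeriv ℝ N f) ξ (fun _ => ξ)
      = VectorFourier.fourierPowSMulRight (-(innerSL ℝ)) (𝓕 f) ξ N (fun _ => ξ) := by
    rw [key]
  have h2pi : ‖(2 * (π:ℝ) * Complex.I : ℂ)‖ = 2 * π := by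
    rw [norm_mul, norm_mul, Complex.norm_I, mul_one]
    simp [abs_of_nonneg Real.pi_nonneg]
  have hnorm : ‖VectorFourier.fourierPowSMulRight (-(innerSL ℝ)) (𝓕 f) ξ N (fun _ => ξ)‖
      = (2 * π) ^ N * (‖ξ‖ ^ (2 * N) * ‖𝓕 f ξ‖) := by
    rw [VectorFourier.fourierPowSMulRight_apply]
    simp only [ContinuousLinearMap.neg_apply, innerSL_apply_apply, real_inner_self_eq_norm_sq]
    rw [norm_smul, norm_smul, norm_pow, norm_neg]
    rw [Finset.prod_const, Finset.card_univ, Fintype.card_fin]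
    rw [innerSL_apply_apply, real_inner_self_eq_norm_sq]
    rw [Real.norm_eq_abs, abs_pow, abs_neg, abs_of_nonneg (sq_nonneg ‖ξ‖)]
    rw [h2pi, ← pow_mul]
  calc (2 * π) ^ N * (‖ξ‖ ^ (2 * N) * ‖𝓕 f ξ‖)
      = ‖𝓕 (iteratedFDeriv ℝ N f) ξ (fun _ => ξ)‖ := by rw [e2, hnorm]
    _ ≤ ‖𝓕 (iteratedFDeriv ℝ N f) ξ‖ * ∏ _i : Fin N, ‖ξ‖ :=
        ContinuousMultilinearMap.le_opNorm _ _
    _ ≤ (∫ x, ‖iteratedFDeriv ℝ N f x‖) * ‖ξ‖ ^ N := by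
        rw [Finset.prod_const, Finset.card_univ, Fintype.card_fin]
        exact mul_le_mul_of_nonneg_right
          (VectorFourier.norm_fourierIntegral_le_integral_norm _ _ _ _ _)
          (pow_nonneg (norm_nonneg _) _)
    _ = ‖ξ‖ ^ N * ∫ x, ‖iteratedFDeriv ℝ N f x‖ := mul_comm _ _

open FourierTransform in
lemma fourier_decay {d N : ℕ} {f : EuclideanSpace ℝ (Fin d) → ℂ} (hN : 1 ≤ N)
    (hf : ContDiff ℝ (N : ℕ) f)
    (h'f : ∀ n : ℕ, n ≤ N → Integrable (iteratedFDeriv ℝ n f))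
    (ξ : EuclideanSpace ℝ (Fin d)) :
    ‖ξ‖ ^ N * ‖𝓕 f ξ‖ ≤ ((2 * π) ^ N)⁻¹ * ∫ x, ‖iteratedFDeriv ℝ N f x‖ := by
  have hB : 0 ≤ ∫ x, ‖iteratedFDeriv ℝ N f x‖ := integral_nonneg fun x => norm_nonneg _
  rcases eq_or_ne ξ 0 with rfl | hξ
  · simp only [norm_zero, zero_pow (by omega : N ≠ 0), zero_mul]
    positivity
  · have hpos : (0:ℝ) < ‖ξ‖ ^ N := pow_pos (norm_pos_iff.2 hξ) N
    have h := fourier_decay_aux hf h'f ξ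
    rw [show 2 * N = N + N from two_mul N, pow_add] at h
    have h2 : (2*π)^N * (‖ξ‖^N * ‖𝓕 f ξ‖) ≤ ∫ x, ‖iteratedFDeriv ℝ N f x‖ := by
      apply le_of_mul_le_mul_left _ hpos
      calc ‖ξ‖^N * ((2*π)^N * (‖ξ‖^N * ‖𝓕 f ξ‖))
          = (2*π)^N * (‖ξ‖^N * ‖ξ‖^N * ‖𝓕 f ξ‖) := by ring
        _ ≤ ‖ξ‖^N * ∫ x, ‖iteratedFDeriv ℝ N f x‖ := h
    rw [inv_mul_eq_div, le_div_iff₀ (pow_pos (by positivity) N)]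
    calc ‖ξ‖^N * ‖𝓕 f ξ‖ * (2*π)^N = (2*π)^N * (‖ξ‖^N * ‖𝓕 f ξ‖) := by ring
      _ ≤ _ := h2

/-! ### FT = 𝓕, Gaussian facts -/

open FourierTransform in
lemma FT_eq {d : ℕ} (f : EuclideanSpace ℝ (Fin d) → ℂ) : FT f = 𝓕 f := by
  funext ξ
  rw [FT, Real.fourier_eq']
  congr 1
  funext x
  rw [smul_eq_mul]
  congr 1
  push_cast [Complex.ofReal_mul]
  ring

lemma integrable_gauss {d : ℕ} {b : ℝ} (hb : 0 < b) :
    Integrable (fun ξ : EuclideanSpace ℝ (Fin d) => rexp (-b * ‖ξ‖ ^ 2)) := by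
  have h2 := (GaussianFourier.integrable_cexp_neg_mul_sq_norm_add
    (V := EuclideanSpace ℝ (Fin d)) (b := (b : ℂ)) (by simpa using hb) 0 0).norm
  have : ∀ a : EuclideanSpace ℝ (Fin d), ((‖a‖:ℂ) ^ 2).re = ‖a‖ ^ 2 := by
    intro a
    norm_cast
  simpa [Complex.norm_exp, this] using h2

lemma gauss_integral {d : ℕ} {ε : ℝ} (hε : 0 < ε) :
    ∫ ξ : EuclideanSpace ℝ (Fin d), rexp (-(π * ε ^ 2) * ‖ξ‖ ^ 2) = (ε ^ d)⁻¹ := by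
  rw [GaussianFourier.integral_rexp_neg_mul_sq_norm (by positivity)]
  rw [finrank_euclideanSpace_fin]
  have h0 : π / (π * ε ^ 2) = (ε ^ 2)⁻¹ := by
    rw [div_eq_iff (by positivity)]
    field_simp
  rw [h0, Real.inv_rpow (by positivity)]
  have h1 : ((ε ^ 2 : ℝ)) ^ ((d : ℝ) / 2) = ε ^ d := by
    have h2 : ((2 : ℕ) : ℝ) * ((d : ℝ) / 2) = (d : ℝ) := by push_cast; ring
    rw [← Real.rpow_natCast ε 2, ← Real.rpow_mul hε.le, h2, Real.rpow_natCast]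
  rw [h1]

lemma mderiv_zero {d : ℕ} (f : EuclideanSpace ℝ (Fin d) → ℂ) :
    mderiv (fun _ => 0) f = f := by
  unfold mderiv
  induction (List.finRange d) with
  | nil => rfl
  | cons i L ih => simpa using ih


open FourierTransform

/-- **Core high-frequency estimate of Theorem 3.2.**
Let `d ≥ 1`, `s ≥ 1` and let `f : ℝ^d → ℂ` be of class `C^{2s}` with `D^α f` integrable
for every multi-index `α` with `|α| ≤ 2s`.  Then there is a constant `C > 0` depending
only on `d` and `s` such that for all `x ∈ ℝ^d`, `η > 0` and `ε > 0`,
`|∫_{‖ξ‖ ≥ η} e^{2πi x·ξ} e^{-π ε² ‖ξ‖²} f̂(ξ) dξ| ≤ C (∑_{|α| ≤ 2s} ‖D^α f‖_{L¹}) ε^{-d} η^{-2s}`,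
the integral converging absolutely. -/
theorem high_frequency_loss_estimate (d s : ℕ) (hd : 1 ≤ d) (hs : 1 ≤ s) :
    ∃ C : ℝ, 0 < C ∧ ∀ f : EuclideanSpace ℝ (Fin d) → ℂ,
      ContDiff ℝ (2 * s) f →
      (∀ α : Fin d → ℕ, (∑ i, α i) ≤ 2 * s → Integrable (mderiv α f)) →
      ∀ x : EuclideanSpace ℝ (Fin d), ∀ η : ℝ, 0 < η → ∀ ε : ℝ, 0 < ε →
        IntegrableOn (fun ξ : EuclideanSpace ℝ (Fin d) =>
            Complex.exp ((2 * π * Complex.I) * ((inner ℝ x ξ : ℝ) : ℂ)) *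
              ((Real.exp (-π * ε ^ 2 * ‖ξ‖ ^ 2) : ℂ) * FT f ξ))
          {ξ : EuclideanSpace ℝ (Fin d) | η ≤ ‖ξ‖} ∧
        ‖∫ ξ in {ξ : EuclideanSpace ℝ (Fin d) | η ≤ ‖ξ‖},
            Complex.exp ((2 * π * Complex.I) * ((inner ℝ x ξ : ℝ) : ℂ)) *
              ((Real.exp (-π * ε ^ 2 * ‖ξ‖ ^ 2) : ℂ) * FT f ξ)‖
          ≤ C * (∑ α ∈ mIdx d (2 * s),
                ∫ y : EuclideanSpace ℝ (Fin d), ‖mderiv α f y‖) *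
              (ε ^ d)⁻¹ * (η ^ (2 * s))⁻¹ := by
  refine ⟨(d : ℝ) ^ (2 * s) * ((2 * π) ^ (2 * s))⁻¹, by positivity, ?_⟩
  intro f hf hint x η hη ε hε
  rw [FT_eq f]
  have hf' : ContDiff ℝ ((2 * s : ℕ) : WithTop ℕ∞) f := by exact_mod_cast hf
  have hint' : ∀ n : ℕ, n ≤ 2 * s → Integrable (iteratedFDeriv ℝ n f) :=
    fun n hn => integrable_iteratedFDeriv_of_mderiv hf' hint hn
  set S := {ξ : EuclideanSpace ℝ (Fin d) | η ≤ ‖ξ‖} with hSdef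
  set Stot : ℝ := ∑ α ∈ mIdx d (2 * s), ∫ y : EuclideanSpace ℝ (Fin d), ‖mderiv α f y‖ with hStot
  set B : ℝ := ∫ x : EuclideanSpace ℝ (Fin d), ‖iteratedFDeriv ℝ (2 * s) f x‖ with hBdef
  have hStot0 : 0 ≤ Stot := Finset.sum_nonneg fun α _ => integral_nonneg fun y => norm_nonneg _
  have hB0 : 0 ≤ B := integral_nonneg fun y => norm_nonneg _
  have hBle : B ≤ (d : ℝ) ^ (2 * s) * Stot := integral_iteratedFDeriv_le hf' hint le_rfl
  have hdecay : ∀ ξ : EuclideanSpace ℝ (Fin d), ξ ∈ S →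
      ‖𝓕 f ξ‖ ≤ ((2 * π) ^ (2 * s))⁻¹ * B * (η ^ (2 * s))⁻¹ := by
    intro ξ hξ
    have h1 : ‖ξ‖ ^ (2 * s) * ‖𝓕 f ξ‖ ≤ ((2 * π) ^ (2 * s))⁻¹ * B :=
      fourier_decay (by omega) hf' hint' ξ
    have h2 : η ^ (2 * s) ≤ ‖ξ‖ ^ (2 * s) := pow_le_pow_left₀ hη.le hξ _
    have h3 : ‖𝓕 f ξ‖ * η ^ (2 * s) ≤ ((2 * π) ^ (2 * s))⁻¹ * B := by
      calc ‖𝓕 f ξ‖ * η ^ (2 * s) ≤ ‖𝓕 f ξ‖ * ‖ξ‖ ^ (2 * s) :=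
          mul_le_mul_of_nonneg_left h2 (norm_nonneg _)
        _ = ‖ξ‖ ^ (2 * s) * ‖𝓕 f ξ‖ := mul_comm _ _
        _ ≤ _ := h1
    rw [← le_div_iff₀ (pow_pos hη (2 * s))] at h3
    simpa [div_eq_mul_inv] using h3
  -- integrability of f
  have hf_int : Integrable f := by
    have := hint (fun _ => 0) (by simp)
    rwa [mderiv_zero] at this
  -- continuity of the Fourier transform
  have hcont : Continuous (𝓕 f) :=
    VectorFourier.fourierIntegral_continuous Real.continuous_fourierChar
      continuous_inner hf_int
  -- norm of the integrand
  have hnormg : ∀ ξ : EuclideanSpace ℝ (Fin d),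
      ‖Complex.exp ((2 * π * Complex.I) * ((inner ℝ x ξ : ℝ) : ℂ)) *
        ((Real.exp (-π * ε ^ 2 * ‖ξ‖ ^ 2) : ℂ) * 𝓕 f ξ)‖
      = rexp (-π * ε ^ 2 * ‖ξ‖ ^ 2) * ‖𝓕 f ξ‖ := by
    intro ξ
    rw [norm_mul, norm_mul]
    have h1 : ‖Complex.exp ((2 * π * Complex.I) * ((inner ℝ x ξ : ℝ) : ℂ))‖ = 1 := by
      rw [Complex.norm_exp]
      have : ((2 * π * Complex.I) * ((inner ℝ x ξ : ℝ) : ℂ)).re = 0 := by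
        simp [Complex.mul_re]
      rw [this, Real.exp_zero]
    have h2 : ‖((Real.exp (-π * ε ^ 2 * ‖ξ‖ ^ 2) : ℝ) : ℂ)‖ = rexp (-π * ε ^ 2 * ‖ξ‖ ^ 2) := by
      rw [Complex.norm_real, Real.norm_eq_abs, abs_of_pos (Real.exp_pos _)]
    rw [h1, h2, one_mul]
  have hb : (0:ℝ) < π * ε ^ 2 := by positivity
  have hgauss : Integrable (fun ξ : EuclideanSpace ℝ (Fin d) => rexp (-π * ε ^ 2 * ‖ξ‖ ^ 2)) := by
    have := integrable_gauss (d := d) hb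
    simpa [neg_mul, mul_assoc] using this
  have hSmeas : MeasurableSet S :=
    (isClosed_le continuous_const continuous_norm).measurableSet
  set M : ℝ := ((2 * π) ^ (2 * s))⁻¹ * B * (η ^ (2 * s))⁻¹ with hM
  have hM0 : 0 ≤ M := by positivity
  have hgcont : Continuous (fun ξ : EuclideanSpace ℝ (Fin d) =>
      Complex.exp ((2 * π * Complex.I) * ((inner ℝ x ξ : ℝ) : ℂ)) *
        ((Real.exp (-π * ε ^ 2 * ‖ξ‖ ^ 2) : ℂ) * 𝓕 f ξ)) := by
    apply Continuous.mul
    · exact Complex.continuous_exp.comp (continuous_const.mul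
        (Complex.continuous_ofReal.comp (continuous_const.inner continuous_id)))
    · exact (Complex.continuous_ofReal.comp
        (Real.continuous_exp.comp (continuous_const.mul (continuous_norm.pow 2)))).mul hcont
  have hIntOn : IntegrableOn (fun ξ : EuclideanSpace ℝ (Fin d) =>
      Complex.exp ((2 * π * Complex.I) * ((inner ℝ x ξ : ℝ) : ℂ)) *
        ((Real.exp (-π * ε ^ 2 * ‖ξ‖ ^ 2) : ℂ) * 𝓕 f ξ)) S := by
    apply Integrable.mono' (((hgauss.const_mul M)).integrableOn (s := S))
    · exact hgcont.aestronglyMeasurable.restrict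
    · rw [ae_restrict_iff' hSmeas]
      refine ae_of_all _ fun ξ hξ => ?_
      rw [hnormg ξ]
      have := hdecay ξ hξ
      have hexp : 0 < rexp (-π * ε ^ 2 * ‖ξ‖ ^ 2) := Real.exp_pos _
      calc rexp (-π * ε ^ 2 * ‖ξ‖ ^ 2) * ‖𝓕 f ξ‖
          ≤ rexp (-π * ε ^ 2 * ‖ξ‖ ^ 2) * M := mul_le_mul_of_nonneg_left this hexp.le
        _ = M * rexp (-π * ε ^ 2 * ‖ξ‖ ^ 2) := mul_comm _ _
  refine ⟨hIntOn, ?_⟩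
  calc ‖∫ ξ in S, Complex.exp ((2 * π * Complex.I) * ((inner ℝ x ξ : ℝ) : ℂ)) *
          ((Real.exp (-π * ε ^ 2 * ‖ξ‖ ^ 2) : ℂ) * 𝓕 f ξ)‖
      ≤ ∫ ξ in S, ‖Complex.exp ((2 * π * Complex.I) * ((inner ℝ x ξ : ℝ) : ℂ)) *
          ((Real.exp (-π * ε ^ 2 * ‖ξ‖ ^ 2) : ℂ) * 𝓕 f ξ)‖ :=
        norm_integral_le_integral_norm _
    _ ≤ ∫ ξ in S, M * rexp (-π * ε ^ 2 * ‖ξ‖ ^ 2) := by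
        apply integral_mono_of_nonneg (ae_of_all _ fun ξ => norm_nonneg _)
          ((hgauss.const_mul M).integrableOn)
        filter_upwards [ae_restrict_mem hSmeas] with ξ hξ
        rw [hnormg ξ]
        calc rexp (-π * ε ^ 2 * ‖ξ‖ ^ 2) * ‖𝓕 f ξ‖
            ≤ rexp (-π * ε ^ 2 * ‖ξ‖ ^ 2) * M :=
              mul_le_mul_of_nonneg_left (hdecay ξ hξ) (Real.exp_pos _).le
          _ = M * rexp (-π * ε ^ 2 * ‖ξ‖ ^ 2) := mul_comm _ _
    _ ≤ ∫ ξ : EuclideanSpace ℝ (Fin d), M * rexp (-π * ε ^ 2 * ‖ξ‖ ^ 2) :=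
        setIntegral_le_integral (hgauss.const_mul M)
          (ae_of_all _ fun ξ => by positivity)
    _ = M * (ε ^ d)⁻¹ := by
        rw [integral_const_mul]
        congr 1
        rw [← gauss_integral (d := d) hε]
        congr 1 with ξ
        ring_nf
    _ ≤ (d : ℝ) ^ (2 * s) * ((2 * π) ^ (2 * s))⁻¹ * Stot * (ε ^ d)⁻¹ * (η ^ (2 * s))⁻¹ := by
        rw [hM]
        have step : ((2 * π) ^ (2 * s))⁻¹ * B
            ≤ (d : ℝ) ^ (2 * s) * ((2 * π) ^ (2 * s))⁻¹ * Stot := by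
          calc ((2 * π) ^ (2 * s))⁻¹ * B
              ≤ ((2 * π) ^ (2 * s))⁻¹ * ((d : ℝ) ^ (2 * s) * Stot) :=
                mul_le_mul_of_nonneg_left hBle (by positivity)
            _ = (d : ℝ) ^ (2 * s) * ((2 * π) ^ (2 * s))⁻¹ * Stot := by ring
        calc ((2 * π) ^ (2 * s))⁻¹ * B * (η ^ (2 * s))⁻¹ * (ε ^ d)⁻¹
            ≤ ((d : ℝ) ^ (2 * s) * ((2 * π) ^ (2 * s))⁻¹ * Stot) * (η ^ (2 * s))⁻¹ * (ε ^ d)⁻¹ := by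
              apply mul_le_mul_of_nonneg_right _ (by positivity)
              exact mul_le_mul_of_nonneg_right step (by positivity)
          _ = (d : ℝ) ^ (2 * s) * ((2 * π) ^ (2 * s))⁻¹ * Stot * (ε ^ d)⁻¹ * (η ^ (2 * s))⁻¹ := by
              ring
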